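/- Let P_n be symmetric probability measures on {0,1}^n and P a probability measure on {0,1}. Suppose that for every fixed k and every (j_1,...,j_k) ∈ {0,1}^k, the marginal P_n^{(k)}(j_1,...,j_k) → P(j_1)···P(j_k) as n → ∞. Then the distribution under P_n of the empirical frequency N(x)/n (where N(x) = #{i : x_i = 1}) converges weakly to the point mass at P(1); equivalently, for all continuous G : [0,1] → ℝ, E_{P_n}[G(N/n)] → G(P(1)). -/

import Mathlib

open Finset Filter Topology

/-- The number of coordinates of `x : {0,1}^n` equal to `1` (i.e. `true`). -/
def countOnes {n : ℕ} (x : Fin n → Bool) : ℕ := ∑ i, if x i then 1 else 0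

namespace Stmt16Aux

noncomputable def ind (b : Bool) : ℝ := if b then 1 else 0

lemma ind_sq (b : Bool) : ind b * ind b = ind b := by cases b <;> simp [ind]

lemma countOnes_cast {n : ℕ} (x : Fin n → Bool) :
    (countOnes x : ℝ) = ∑ i, ind (x i) := by
  unfold countOnes ind
  push_cast
  exact Finset.sum_congr rfl fun i _ => by split <;> simp

lemma countOnes_le {n : ℕ} (x : Fin n → Bool) : countOnes x ≤ n := by
  unfold countOnes
  calc ∑ i, (if x i then 1 else 0) ≤ ∑ _i : Fin n, 1 :=
        Finset.sum_le_sum fun i _ => by split <;> simp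
    _ = n := by simp

lemma sum_perm {n : ℕ} (p : (Fin n → Bool) → ℝ)
    (hsym : ∀ (π : Equiv.Perm (Fin n)) x, p (x ∘ π) = p x)
    (π : Equiv.Perm (Fin n)) (f : (Fin n → Bool) → ℝ) :
    ∑ x : Fin n → Bool, p x * f (x ∘ π) = ∑ x : Fin n → Bool, p x * f x := by
  have h1 : ∀ x : Fin n → Bool, p x * f (x ∘ π) = p (x ∘ π) * f (x ∘ π) := by
    intro x; rw [hsym]
  rw [Finset.sum_congr rfl (fun x _ => h1 x)]
  exact Fintype.sum_equiv (Equiv.arrowCongr π.symm (Equiv.refl Bool))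
    (fun x => p (x ∘ ⇑π) * f (x ∘ ⇑π)) (fun z => p z * f z) (fun x => rfl)

lemma exists_perm {α : Type*} [DecidableEq α] {a b i j : α} (hab : a ≠ b) (hij : i ≠ j) :
    ∃ σ : Equiv.Perm α, σ a = i ∧ σ b = j := by
  refine ⟨(Equiv.swap a i).trans (Equiv.swap (Equiv.swap a i b) j), ?_, ?_⟩
  · simp only [Equiv.trans_apply, Equiv.swap_apply_left]
    have h1 : i ≠ Equiv.swap a i b := fun h => hab ((Equiv.swap a i).injective (by
      rw [Equiv.swap_apply_left]; exact h))
    exact Equiv.swap_apply_of_ne_of_ne h1 hij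
  · simp only [Equiv.trans_apply, Equiv.swap_apply_left]

lemma sum_ind_eq {n : ℕ} (p : (Fin n → Bool) → ℝ)
    (hsym : ∀ (π : Equiv.Perm (Fin n)) x, p (x ∘ π) = p x) (i j : Fin n) :
    ∑ x : Fin n → Bool, p x * ind (x i) = ∑ x : Fin n → Bool, p x * ind (x j) := by
  have h : ∀ x : Fin n → Bool, p x * ind (x i) = p x * ind ((x ∘ Equiv.swap j i) j) := by
    intro x; simp [Equiv.swap_apply_left]
  rw [Finset.sum_congr rfl fun x _ => h x]
  exact sum_perm p hsym (Equiv.swap j i) (fun y => ind (y j))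

lemma sum_ind2_eq {n : ℕ} (p : (Fin n → Bool) → ℝ)
    (hsym : ∀ (π : Equiv.Perm (Fin n)) x, p (x ∘ π) = p x)
    {i j i' j' : Fin n} (hij : i ≠ j) (hij' : i' ≠ j') :
    ∑ x : Fin n → Bool, p x * (ind (x i) * ind (x j))
      = ∑ x : Fin n → Bool, p x * (ind (x i') * ind (x j')) := by
  obtain ⟨σ, hσ1, hσ2⟩ := exists_perm hij' hij
  have h : ∀ x : Fin n → Bool, p x * (ind (x i) * ind (x j))
      = p x * (ind ((x ∘ σ) i') * ind ((x ∘ σ) j')) := by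
    intro x; simp [Function.comp, hσ1, hσ2]
  rw [Finset.sum_congr rfl fun x _ => h x]
  exact sum_perm p hsym σ (fun y => ind (y i') * ind (y j'))

lemma first_moment {n : ℕ} (p : (Fin n → Bool) → ℝ)
    (hsym : ∀ (π : Equiv.Perm (Fin n)) x, p (x ∘ π) = p x) (i0 : Fin n) :
    ∑ x : Fin n → Bool, p x * (countOnes x : ℝ)
      = n * ∑ x : Fin n → Bool, p x * ind (x i0) := by
  calc ∑ x : Fin n → Bool, p x * (countOnes x : ℝ)
      = ∑ x : Fin n → Bool, ∑ i, p x * ind (x i) := by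
        simp only [countOnes_cast, Finset.mul_sum]
    _ = ∑ i, ∑ x : Fin n → Bool, p x * ind (x i) := Finset.sum_comm
    _ = ∑ _i : Fin n, ∑ x : Fin n → Bool, p x * ind (x i0) :=
        Finset.sum_congr rfl fun i _ => sum_ind_eq p hsym i i0
    _ = n * ∑ x : Fin n → Bool, p x * ind (x i0) := by
        rw [Finset.sum_const, card_univ, Fintype.card_fin, nsmul_eq_mul]

lemma second_moment {n : ℕ} (p : (Fin n → Bool) → ℝ)
    (hsym : ∀ (π : Equiv.Perm (Fin n)) x, p (x ∘ π) = p x) {i0 i1 : Fin n} (h01 : i0 ≠ i1) :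
    ∑ x : Fin n → Bool, p x * (countOnes x : ℝ) ^ 2
      = ((n : ℝ) * ((n : ℝ) - 1)) * ∑ x : Fin n → Bool, p x * (ind (x i0) * ind (x i1))
        + n * ∑ x : Fin n → Bool, p x * ind (x i0) := by
  set I := ∑ x : Fin n → Bool, p x * ind (x i0) with hI
  set J := ∑ x : Fin n → Bool, p x * (ind (x i0) * ind (x i1)) with hJ
  calc ∑ x : Fin n → Bool, p x * (countOnes x : ℝ) ^ 2
      = ∑ x : Fin n → Bool, ∑ i, ∑ j, p x * (ind (x i) * ind (x j)) := by
        refine Finset.sum_congr rfl fun x _ => ?_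
        rw [countOnes_cast, sq, Finset.sum_mul_sum]
        simp only [Finset.mul_sum]
    _ = ∑ i, ∑ x : Fin n → Bool, ∑ j, p x * (ind (x i) * ind (x j)) := Finset.sum_comm
    _ = ∑ i, ∑ j, ∑ x : Fin n → Bool, p x * (ind (x i) * ind (x j)) :=
        Finset.sum_congr rfl fun i _ => Finset.sum_comm
    _ = ∑ _i : Fin n, ∑ _j : Fin n, (J + if _i = _j then I - J else 0) := by
        refine Finset.sum_congr rfl fun i _ => Finset.sum_congr rfl fun j _ => ?_
        by_cases h : i = j
        · subst h
          simp only [if_pos rfl]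
          have : ∑ x : Fin n → Bool, p x * (ind (x i) * ind (x i))
              = ∑ x : Fin n → Bool, p x * ind (x i) := by
            refine Finset.sum_congr rfl fun x _ => by rw [ind_sq]
          rw [this, sum_ind_eq p hsym i i0]
          simp only [if_true]
          ring
        · rw [if_neg h, sum_ind2_eq p hsym h h01, add_zero]
    _ = ((n : ℝ) * ((n : ℝ) - 1)) * J + n * I := by
        simp only [Finset.sum_add_distrib, Finset.sum_const, Finset.sum_ite_eq,
          Finset.mem_univ, if_pos, card_univ, Fintype.card_fin, nsmul_eq_mul]
        ring

lemma M1_eq {n : ℕ} (hn : 0 < n) (p : (Fin n → Bool) → ℝ) :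
    ∑ y ∈ univ.filter
        (fun y : Fin n → Bool => ∀ i : Fin n, (h : (i : ℕ) < 1) →
          y i = (fun _ : Fin 1 => true) ⟨i, h⟩),
      p y = ∑ x : Fin n → Bool, p x * ind (x ⟨0, hn⟩) := by
  rw [Finset.sum_filter]
  refine Finset.sum_congr rfl fun y _ => ?_
  by_cases h : y ⟨0, hn⟩ = true
  · rw [if_pos, h]
    · simp [ind]
    · intro i hi
      show y i = true
      have hie : i = ⟨0, hn⟩ := Fin.ext (Nat.lt_one_iff.mp hi)
      rw [hie]; exact h
  · rw [if_neg, show ind (y ⟨0, hn⟩) = 0 by simp [ind, h], mul_zero]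
    intro hc
    exact h (hc ⟨0, hn⟩ Nat.one_pos)

lemma M2_eq {n : ℕ} (hn : 2 ≤ n) (p : (Fin n → Bool) → ℝ) :
    ∑ y ∈ univ.filter
        (fun y : Fin n → Bool => ∀ i : Fin n, (h : (i : ℕ) < 2) →
          y i = (fun _ : Fin 2 => true) ⟨i, h⟩),
      p y = ∑ x : Fin n → Bool,
        p x * (ind (x ⟨0, by omega⟩) * ind (x ⟨1, by omega⟩)) := by
  rw [Finset.sum_filter]
  refine Finset.sum_congr rfl fun y _ => ?_
  by_cases h0 : y ⟨0, by omega⟩ = true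
  · by_cases h1 : y ⟨1, by omega⟩ = true
    · rw [if_pos, h0, h1]
      · simp [ind]
      · intro i hi
        show y i = true
        have : (i : ℕ) = 0 ∨ (i : ℕ) = 1 := by omega
        rcases this with h | h
        · have hie : i = ⟨0, by omega⟩ := Fin.ext h
          rw [hie]; exact h0
        · have hie : i = ⟨1, by omega⟩ := Fin.ext h
          rw [hie]; exact h1
    · rw [if_neg, show ind (y ⟨1, by omega⟩) = 0 by simp [ind, h1], mul_zero, mul_zero]
      intro hc
      exact h1 (hc ⟨1, by omega⟩ (by norm_num))
  · rw [if_neg, show ind (y ⟨0, by omega⟩) = 0 by simp [ind, h0], zero_mul, mul_zero]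
    intro hc
    exact h0 (hc ⟨0, by omega⟩ (by norm_num))

end Stmt16Aux

open Stmt16Aux

/-- Law of large numbers for chaotic sequences: if symmetric probability measures
`P_n` on `{0,1}^n` are `P`-chaotic (all finite-dimensional marginals converge to
products), then the empirical frequency `N(x)/n` converges in distribution under
`P_n` to the point mass at `P(1)`: `E_{P_n}[G(N/n)] → G(P(1))` for every continuous
`G : [0,1] → ℝ`. -/
theorem stmt_16 (p : (n : ℕ) → (Fin n → Bool) → ℝ) (P : Bool → ℝ)
    (hnonneg : ∀ n x, 0 ≤ p n x)
    (hsum : ∀ n, ∑ x : Fin n → Bool, p n x = 1)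
    (hsym : ∀ n (π : Equiv.Perm (Fin n)) (x : Fin n → Bool), p n (x ∘ π) = p n x)
    (hPnonneg : ∀ b, 0 ≤ P b) (hPsum : P false + P true = 1)
    (hmarg : ∀ (k : ℕ) (x : Fin k → Bool),
      Tendsto (fun n => ∑ y ∈ univ.filter
            (fun y : Fin n → Bool => ∀ i : Fin n, (h : (i : ℕ) < k) → y i = x ⟨i, h⟩),
          p n y)
        atTop (𝓝 (∏ r : Fin k, P (x r))))
    (G : ℝ → ℝ) (hG : ContinuousOn G (Set.Icc (0 : ℝ) 1)) :
    Tendsto (fun n => ∑ x : Fin n → Bool, p n x * G ((countOnes x : ℝ) / n))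
      atTop (𝓝 (G (P true))) := by
  set a := P true with ha
  have ha0 : 0 ≤ a := hPnonneg true
  have ha1 : a ≤ 1 := by have := hPnonneg false; linarith
  -- marginal sequences
  set M1 : ℕ → ℝ := fun n => ∑ y ∈ univ.filter
      (fun y : Fin n → Bool => ∀ i : Fin n, (h : (i : ℕ) < 1) →
        y i = (fun _ : Fin 1 => true) ⟨i, h⟩), p n y with hM1def
  set M2 : ℕ → ℝ := fun n => ∑ y ∈ univ.filter
      (fun y : Fin n → Bool => ∀ i : Fin n, (h : (i : ℕ) < 2) →
        y i = (fun _ : Fin 2 => true) ⟨i, h⟩), p n y with hM2def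
  have hM1 : Tendsto M1 atTop (𝓝 a) := by
    have h := hmarg 1 (fun _ => true)
    rw [show ∏ r : Fin 1, P ((fun _ : Fin 1 => true) r) = a by simp [ha]] at h
    exact h
  have hM2 : Tendsto M2 atTop (𝓝 (a * a)) := by
    have h := hmarg 2 (fun _ => true)
    rw [show ∏ r : Fin 2, P ((fun _ : Fin 2 => true) r) = a * a by
      rw [Fin.prod_univ_two]] at h
    exact h
  -- mean and second moment sequences
  set A : ℕ → ℝ := fun n => ∑ x : Fin n → Bool, p n x * ((countOnes x : ℝ) / n) with hAdef
  set B : ℕ → ℝ := fun n => ∑ x : Fin n → Bool, p n x * ((countOnes x : ℝ) / n) ^ 2 with hBdef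
  have hAeq : ∀ n, 0 < n → A n = M1 n := by
    intro n hn
    have h1 : A n = (∑ x : Fin n → Bool, p n x * (countOnes x : ℝ)) / n := by
      rw [hAdef, Finset.sum_div]
      exact Finset.sum_congr rfl fun x _ => (mul_div_assoc _ _ _).symm
    have e1 : M1 n = ∑ x : Fin n → Bool, p n x * ind (x ⟨0, hn⟩) := M1_eq hn (p n)
    rw [h1, first_moment (p n) (hsym n) ⟨0, hn⟩,
      mul_div_cancel_left₀ _ (by positivity : (n : ℝ) ≠ 0), e1]
  have hBeq : ∀ n, 2 ≤ n → B n = (((n : ℝ) - 1) / n) * M2 n + (1 / n) * M1 n := by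
    intro n hn
    have hn0 : (0 : ℝ) < n := by positivity
    have h1 : B n = (∑ x : Fin n → Bool, p n x * (countOnes x : ℝ) ^ 2) / (n : ℝ) ^ 2 := by
      rw [hBdef, Finset.sum_div]
      refine Finset.sum_congr rfl fun x _ => ?_
      rw [div_pow, mul_div_assoc]
    have e1 : M1 n = ∑ x : Fin n → Bool, p n x * ind (x ⟨0, by omega⟩) :=
      M1_eq (by omega) (p n)
    have e2 : M2 n = ∑ x : Fin n → Bool,
        p n x * (ind (x ⟨0, by omega⟩) * ind (x ⟨1, by omega⟩)) := M2_eq hn (p n)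
    have h2 : ∑ x : Fin n → Bool, p n x * (countOnes x : ℝ) ^ 2
        = ((n : ℝ) * ((n : ℝ) - 1)) * M2 n + (n : ℝ) * M1 n := by
      rw [e1, e2]
      exact second_moment (p n) (hsym n)
        (show (⟨0, by omega⟩ : Fin n) ≠ ⟨1, by omega⟩ by
          intro h; exact absurd (congrArg Fin.val h) (by norm_num))
    rw [h1, h2]
    field_simp
  have hA : Tendsto A atTop (𝓝 a) := by
    refine hM1.congr' ?_
    filter_upwards [eventually_ge_atTop 1] with n hn
    exact (hAeq n (by omega)).symm
  have hB : Tendsto B atTop (𝓝 (a * a)) := by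
    have haux : Tendsto (fun n : ℕ => ((n : ℝ) - 1) / n) atTop (𝓝 1) := by
      have h2 : Tendsto (fun n : ℕ => 1 - 1 / (n : ℝ)) atTop (𝓝 (1 - 0)) :=
        tendsto_const_nhds.sub tendsto_one_div_atTop_nhds_zero_nat
      rw [sub_zero] at h2
      refine h2.congr' ?_
      filter_upwards [eventually_ge_atTop 1] with n hn
      have : (n : ℝ) ≠ 0 := by positivity
      field_simp
    have h3 : Tendsto (fun n : ℕ => (((n : ℝ) - 1) / n) * M2 n + (1 / n) * M1 n)
        atTop (𝓝 (1 * (a * a) + 0 * a)) :=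
      (haux.mul hM2).add (tendsto_one_div_atTop_nhds_zero_nat.mul hM1)
    rw [one_mul, zero_mul, add_zero] at h3
    refine h3.congr' ?_
    filter_upwards [eventually_ge_atTop 2] with n hn
    exact (hBeq n hn).symm
  -- variance tends to zero
  set V : ℕ → ℝ := fun n => ∑ x : Fin n → Bool,
      p n x * ((countOnes x : ℝ) / n - a) ^ 2 with hVdef
  have hVeq : ∀ n, V n = B n - 2 * a * A n + a ^ 2 := by
    intro n
    have h1 : V n = ∑ x : Fin n → Bool,
        (p n x * ((countOnes x : ℝ) / n) ^ 2
          - 2 * a * (p n x * ((countOnes x : ℝ) / n)) + a ^ 2 * p n x) := by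
      rw [hVdef]
      exact Finset.sum_congr rfl fun x _ => by ring
    rw [h1, Finset.sum_add_distrib, Finset.sum_sub_distrib, ← Finset.mul_sum,
      ← Finset.mul_sum, hsum n, mul_one, hAdef, hBdef]
  have hV : Tendsto V atTop (𝓝 0) := by
    have h1 : Tendsto (fun n => B n - 2 * a * A n + a ^ 2) atTop
        (𝓝 (a * a - 2 * a * a + a ^ 2)) :=
      (hB.sub (hA.const_mul (2 * a))).add tendsto_const_nhds
    have h2 : a * a - 2 * a * a + a ^ 2 = 0 := by ring
    rw [h2] at h1
    exact h1.congr (fun n => (hVeq n).symm)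
  -- values of the empirical frequency lie in [0,1]
  have ht : ∀ (n : ℕ) (x : Fin n → Bool), (countOnes x : ℝ) / n ∈ Set.Icc (0 : ℝ) 1 := by
    intro n x
    rcases Nat.eq_zero_or_pos n with h | h
    · subst h; simp
    · constructor
      · positivity
      · rw [div_le_one (by positivity)]
        exact_mod_cast countOnes_le x
  have hamem : a ∈ Set.Icc (0 : ℝ) 1 := ⟨ha0, ha1⟩
  -- the final ε-argument
  rw [Metric.tendsto_atTop]
  intro ε hε
  obtain ⟨C, hC⟩ := isCompact_Icc.exists_bound_of_continuousOn hG
  set C' : ℝ := max C 1 with hC'def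
  have hC'pos : 0 < C' := lt_of_lt_of_le one_pos (le_max_right _ _)
  have hC' : ∀ x ∈ Set.Icc (0 : ℝ) 1, |G x| ≤ C' := fun x hx =>
    le_trans (hC x hx) (le_max_left _ _)
  have hu := isCompact_Icc.uniformContinuousOn_of_continuous hG
  rw [Metric.uniformContinuousOn_iff] at hu
  obtain ⟨δ, hδpos, hδ⟩ := hu (ε / 2) (by positivity)
  set c : ℝ := 2 * C' / δ ^ 2 with hcdef
  have hcpos : 0 < c := by positivity
  have key : ∀ t ∈ Set.Icc (0 : ℝ) 1, |G t - G a| ≤ ε / 2 + c * (t - a) ^ 2 := by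
    intro t htm
    by_cases hd : dist t a < δ
    · have h1 := hδ t htm a hamem hd
      rw [Real.dist_eq] at h1
      nlinarith [sq_nonneg (t - a), mul_nonneg hcpos.le (sq_nonneg (t - a))]
    · push_neg at hd
      have h2 : δ ^ 2 ≤ (t - a) ^ 2 := by
        rw [Real.dist_eq] at hd
        nlinarith [abs_nonneg (t - a), sq_abs (t - a)]
      have h3 : 2 * C' ≤ c * (t - a) ^ 2 := by
        rw [hcdef, div_mul_eq_mul_div, le_div_iff₀ (by positivity)]
        nlinarith
      have h4 : |G t - G a| ≤ 2 * C' := by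
        calc |G t - G a| ≤ |G t| + |G a| := abs_sub _ _
          _ ≤ C' + C' := add_le_add (hC' t htm) (hC' a hamem)
          _ = 2 * C' := by ring
      linarith
  obtain ⟨N, hN⟩ := (Metric.tendsto_atTop.mp hV) ((ε / 2) / c) (by positivity)
  refine ⟨N, fun n hn => ?_⟩
  have hVn : V n < (ε / 2) / c := by
    have := hN n hn
    rw [Real.dist_eq, sub_zero] at this
    exact lt_of_le_of_lt (le_abs_self _) this
  have hsplit : (∑ x : Fin n → Bool, p n x * G ((countOnes x : ℝ) / n)) - G a
      = ∑ x : Fin n → Bool, p n x * (G ((countOnes x : ℝ) / n) - G a) := by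
    have : ∑ x : Fin n → Bool, p n x * (G ((countOnes x : ℝ) / n) - G a)
        = (∑ x : Fin n → Bool, p n x * G ((countOnes x : ℝ) / n))
          - ∑ x : Fin n → Bool, p n x * G a := by
      rw [← Finset.sum_sub_distrib]
      exact Finset.sum_congr rfl fun x _ => mul_sub _ _ _
    rw [this, ← Finset.sum_mul, hsum n, one_mul]
  rw [Real.dist_eq]
  calc |(∑ x : Fin n → Bool, p n x * G ((countOnes x : ℝ) / n)) - G a|
      = |∑ x : Fin n → Bool, p n x * (G ((countOnes x : ℝ) / n) - G a)| := by
        rw [hsplit]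
    _ ≤ ∑ x : Fin n → Bool, |p n x * (G ((countOnes x : ℝ) / n) - G a)| :=
        Finset.abs_sum_le_sum_abs _ _
    _ = ∑ x : Fin n → Bool, p n x * |G ((countOnes x : ℝ) / n) - G a| := by
        refine Finset.sum_congr rfl fun x _ => ?_
        rw [abs_mul, abs_of_nonneg (hnonneg n x)]
    _ ≤ ∑ x : Fin n → Bool, p n x * (ε / 2 + c * ((countOnes x : ℝ) / n - a) ^ 2) :=
        Finset.sum_le_sum fun x _ =>
          mul_le_mul_of_nonneg_left (key _ (ht n x)) (hnonneg n x)
    _ = ε / 2 + c * V n := by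
        have : ∀ x : Fin n → Bool,
            p n x * (ε / 2 + c * ((countOnes x : ℝ) / n - a) ^ 2)
              = (ε / 2) * p n x + c * (p n x * ((countOnes x : ℝ) / n - a) ^ 2) := by
          intro x; ring
        rw [Finset.sum_congr rfl fun x _ => this x, Finset.sum_add_distrib,
          ← Finset.mul_sum, ← Finset.mul_sum, hsum n, mul_one, hVdef]
    _ < ε / 2 + ε / 2 := by
        have : c * V n < c * ((ε / 2) / c) := mul_lt_mul_of_pos_left hVn hcpos
        rw [mul_div_cancel₀ _ (ne_of_gt hcpos)] at this
        linarith
    _ = ε := by ring
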